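/- arXiv:2308.03773 — 4 statements merged into one kernel-verified Lean document; each statement's English description precedes it below -/
import Mathlib

section
/- Let ρ(β₁, β₃) = (2β₁β₃ + 2β₁ + 2β₃ - β₁² - β₃² - 1) / (1 - (β₁-β₃)²) on the interior of U = {(β₁,β₃) ∈ [0,1]² : β₁ + β₃ ≤ 1}. Then ρ is monotone with respect to the coordinatewise partial order: if (β₁,β₃) and (β₁',β₃') are in the interior of U with β₁ ≤ β₁' and β₃ ≤ β₃', then ρ(β₁,β₃) ≤ ρ(β₁',β₃'). -/
lemma aux (a b a' : ℝ) (ha : 0 < a) (hb : 0 < b) (hs : a + b < 1)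
    (ha' : 0 < a') (hs' : a' + b < 1) (hle : a ≤ a') :
    (2*a*b + 2*a + 2*b - a^2 - b^2 - 1) / (1 - (a-b)^2) ≤
    (2*a'*b + 2*a' + 2*b - a'^2 - b^2 - 1) / (1 - (a'-b)^2) := by
  have d1 : 0 < 1 - (a-b)^2 := by nlinarith
  have d2 : 0 < 1 - (a'-b)^2 := by nlinarith
  rw [div_le_div_iff₀ d1 d2]
  have hp3 : (0:ℝ) < 1 + a' - b := by linarith
  -- key: (1-a'-b)·(1+a-b)(1-a+b) ≤ (1-a-b)·(1+a'-b)(1-a'+b)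
  have step1 : (1-a'-b) * ((1+a-b) * (1-a+b)) ≤ (1-a'-b) * ((1+a'-b) * (1-a+b)) := by
    gcongr <;> linarith
  have inner : (1-a'-b) * (1-a+b) ≤ (1-a-b) * (1-a'+b) := by nlinarith
  have step2 : (1-a'-b) * ((1+a'-b) * (1-a+b)) ≤ (1-a-b) * ((1+a'-b) * (1-a'+b)) := by
    have := mul_le_mul_of_nonneg_left inner hp3.le
    linarith [this]
  have key := step1.trans step2
  have hid2 : (2*a'*b + 2*a' + 2*b - a'^2 - b^2 - 1) * (1 - (a-b)^2)
      - (2*a*b + 2*a + 2*b - a^2 - b^2 - 1) * (1 - (a'-b)^2)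
      = 2 * ((1-a-b) * ((1+a'-b) * (1-a'+b)) - (1-a'-b) * ((1+a-b) * (1-a+b))) := by ring
  linarith

theorem phi_coefficient_monotone
    (β₁ β₃ β₁' β₃' : ℝ)
    (h1 : 0 < β₁) (h3 : 0 < β₃) (hsum : β₁ + β₃ < 1)
    (h1' : 0 < β₁') (h3' : 0 < β₃') (hsum' : β₁' + β₃' < 1)
    (hle1 : β₁ ≤ β₁') (hle3 : β₃ ≤ β₃') :
    (2 * β₁ * β₃ + 2 * β₁ + 2 * β₃ - β₁ ^ 2 - β₃ ^ 2 - 1) /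
        (1 - (β₁ - β₃) ^ 2) ≤
      (2 * β₁' * β₃' + 2 * β₁' + 2 * β₃' - β₁' ^ 2 - β₃' ^ 2 - 1) /
        (1 - (β₁' - β₃') ^ 2) := by
  have step1 := aux β₁ β₃ β₁' h1 h3 hsum h1' (by linarith) hle1
  have step2 := aux β₃ β₁' β₃' h3 h1' (by linarith) h3' (by linarith) hle3
  calc (2 * β₁ * β₃ + 2 * β₁ + 2 * β₃ - β₁ ^ 2 - β₃ ^ 2 - 1) / (1 - (β₁ - β₃) ^ 2)
      ≤ (2*β₁'*β₃ + 2*β₁' + 2*β₃ - β₁'^2 - β₃^2 - 1) / (1 - (β₁' - β₃)^2) := by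
        convert step1 using 2 <;> ring
    _ ≤ (2 * β₁' * β₃' + 2 * β₁' + 2 * β₃' - β₁' ^ 2 - β₃' ^ 2 - 1) / (1 - (β₁' - β₃') ^ 2) := by
        convert step2 using 2 <;> ring
end

section
/- For (β₁,β₃) in the interior of U = {(x,y) ∈ [0,1]² : x + y ≤ 1}, the numerator of ∂ρ/∂β₁, namely 4(β₁+1)β₃ + 2(β₁-1)² - 6β₃², is nonnegative. -/
theorem phi_deriv_numerator_nonneg
    (β₁ β₃ : ℝ) (h1 : 0 < β₁) (h3 : 0 < β₃) (hsum : β₁ + β₃ < 1) :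
    0 ≤ 4 * (β₁ + 1) * β₃ + 2 * (β₁ - 1) ^ 2 - 6 * β₃ ^ 2 := by
  nlinarith [sq_nonneg (β₁ + β₃ - 1), sq_nonneg (β₁ - β₃), mul_pos h1 h3, sq_nonneg β₃]
end

section
/- Let X be a binomially distributed random variable with parameters n and p ∈ (0,1), let k be a natural number with 0 < k/n < p. Then Pr(X ≤ k) ≤ exp(-n · D(k/n ‖ p)), where D(a‖p) = a·log(a/p) + (1-a)·log((1-a)/(1-p)) is the Kullback–Leibler divergence between Bernoulli(a) and Bernoulli(p). -/
open MeasureTheory Real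

/-- Kullback–Leibler divergence between Bernoulli(a) and Bernoulli(p). -/
noncomputable def klBern (a p : ℝ) : ℝ :=
  a * Real.log (a / p) + (1 - a) * Real.log ((1 - a) / (1 - p))

theorem binomial_lower_tail_KL
    {Ω : Type*} [MeasurableSpace Ω] (μ : Measure Ω) [IsProbabilityMeasure μ]
    (X : Ω → ℕ) (hX : Measurable X) (n : ℕ) (p : ℝ) (hp : p ∈ Set.Ioo (0:ℝ) 1)
    (hbin : ∀ m : ℕ, (μ {ω | X ω = m}).toReal =
      (n.choose m : ℝ) * p ^ m * (1 - p) ^ (n - m))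
    (k : ℕ) (hk0 : 0 < (k : ℝ) / n) (hkp : (k : ℝ) / n < p) :
    (μ {ω | X ω ≤ k}).toReal ≤ Real.exp (-(n : ℝ) * klBern ((k : ℝ) / n) p) := by
  obtain ⟨hp0, hp1⟩ := hp
  have hq0 : (0:ℝ) < 1 - p := by linarith
  have hn0 : 0 < n := by
    rcases Nat.eq_zero_or_pos n with h | h
    · subst h; simp at hk0
    · exact h
  have hnR : (0:ℝ) < n := by exact_mod_cast hn0
  set a : ℝ := (k : ℝ) / n with ha_def
  have ha0 : 0 < a := hk0
  have hap : a < p := hkp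
  have ha1 : a < 1 := lt_trans hap hp1
  have hb0 : (0:ℝ) < 1 - a := by linarith
  have hna : (n:ℝ) * a = k := by
    rw [ha_def, mul_div_cancel₀ _ (ne_of_gt hnR)]
  have hkn : k < n := by
    have : (k:ℝ) < n := by
      have := (div_lt_one hnR).mp ha1
      exact this
    exact_mod_cast this
  set t : ℝ := a * (1 - p) / (p * (1 - a)) with ht_def
  have ht0 : 0 < t := by positivity
  have ht1 : t < 1 := by
    rw [ht_def, div_lt_one (by positivity)]
    nlinarith
  have hsum_eq : t * p + (1 - p) = (1 - p) / (1 - a) := by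
    rw [ht_def]; field_simp; ring
  -- Step 1: decompose the measure
  have hsplit : (μ {ω | X ω ≤ k}).toReal =
      ∑ m ∈ Finset.range (k+1), ((n.choose m : ℝ) * p ^ m * (1 - p) ^ (n - m)) := by
    have hset : {ω | X ω ≤ k} = ⋃ m ∈ Finset.range (k+1), {ω | X ω = m} := by
      ext ω; simp [Nat.lt_succ_iff]
    rw [hset, measure_biUnion_finset]
    · rw [ENNReal.toReal_sum (fun m _ => measure_ne_top μ _)]
      exact Finset.sum_congr rfl fun m _ => hbin m
    · intro i _ j _ hij
      refine Set.disjoint_left.mpr fun ω h1 h2 => hij ?_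
      simp only [Set.mem_setOf_eq] at h1 h2
      rw [← h1, ← h2]
    · intro m _; exact hX (measurableSet_singleton m)
  -- Step 2: Chernoff bound on the sum
  have hbound : t ^ k * ∑ m ∈ Finset.range (k+1),
      ((n.choose m : ℝ) * p ^ m * (1 - p) ^ (n - m)) ≤ (t * p + (1 - p)) ^ n := by
    rw [Finset.mul_sum]
    calc ∑ m ∈ Finset.range (k+1), t ^ k * ((n.choose m : ℝ) * p ^ m * (1 - p) ^ (n - m))
        ≤ ∑ m ∈ Finset.range (k+1), ((n.choose m : ℝ) * (t * p) ^ m * (1 - p) ^ (n - m)) := by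
          apply Finset.sum_le_sum
          intro m hm
          have hmk : m ≤ k := Nat.lt_succ_iff.mp (Finset.mem_range.mp hm)
          have h1 : t ^ k ≤ t ^ m := pow_le_pow_of_le_one ht0.le ht1.le hmk
          calc t ^ k * ((n.choose m : ℝ) * p ^ m * (1 - p) ^ (n - m))
              ≤ t ^ m * ((n.choose m : ℝ) * p ^ m * (1 - p) ^ (n - m)) := by
                apply mul_le_mul_of_nonneg_right h1 (by positivity)
            _ = (n.choose m : ℝ) * (t * p) ^ m * (1 - p) ^ (n - m) := by
                rw [mul_pow]; ring
      _ ≤ ∑ m ∈ Finset.range (n+1), ((n.choose m : ℝ) * (t * p) ^ m * (1 - p) ^ (n - m)) := by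
          apply Finset.sum_le_sum_of_subset_of_nonneg
          · exact Finset.range_subset_range.mpr (by omega)
          · intro m _ _; positivity
      _ = (t * p + (1 - p)) ^ n := by
          rw [add_pow]
          exact Finset.sum_congr rfl fun m _ => by ring
  -- Step 3: identify the exponential
  have hlogt : Real.log t = Real.log a + Real.log (1 - p) - Real.log p - Real.log (1 - a) := by
    rw [ht_def, Real.log_div (by positivity) (by positivity),
      Real.log_mul (ne_of_gt ha0) (ne_of_gt hq0),
      Real.log_mul (ne_of_gt hp0) (ne_of_gt hb0)]
    ring
  have hexp_eq : -(n:ℝ) * klBern a p =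
      (n:ℝ) * Real.log ((1 - p) / (1 - a)) - (k:ℝ) * Real.log t := by
    unfold klBern
    rw [Real.log_div (ne_of_gt ha0) (ne_of_gt hp0),
      Real.log_div (ne_of_gt hb0) (ne_of_gt hq0),
      Real.log_div (ne_of_gt hq0) (ne_of_gt hb0), hlogt]
    linear_combination (Real.log p + Real.log (1 - a) - Real.log a - Real.log (1 - p)) * hna
  have hfinal : ((1 - p) / (1 - a)) ^ n / t ^ k = Real.exp (-(n:ℝ) * klBern a p) := by
    rw [hexp_eq, Real.exp_sub]
    have e1 : Real.exp ((n:ℝ) * Real.log ((1 - p) / (1 - a))) = ((1 - p) / (1 - a)) ^ n := by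
      rw [mul_comm, ← Real.rpow_def_of_pos (by positivity), Real.rpow_natCast]
    have e2 : Real.exp ((k:ℝ) * Real.log t) = t ^ k := by
      rw [mul_comm, ← Real.rpow_def_of_pos ht0, Real.rpow_natCast]
    rw [e1, e2]
  rw [hsplit, ← hfinal, ← hsum_eq]
  rw [le_div_iff₀ (by positivity)]
  calc (∑ m ∈ Finset.range (k+1), ((n.choose m : ℝ) * p ^ m * (1 - p) ^ (n - m))) * t ^ k
      = t ^ k * ∑ m ∈ Finset.range (k+1), ((n.choose m : ℝ) * p ^ m * (1 - p) ^ (n - m)) := by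
        ring
    _ ≤ (t * p + (1 - p)) ^ n := hbound
end

section
/- Fix β₁, β₃ in the interior of U = {(x,y) ∈ [0,1]² : x+y ≤ 1} and ε₁, ε₃ > 0 small enough that the square region (β₁,β₃) + [-ε₁,ε₁] × [-ε₃,ε₃] lies inside the interior of U. Then the maximum of |ρ(β̃₁,β̃₃) - ρ(β₁,β₃)| over all (β̃₁,β̃₃) with |β̃₁-β₁| ≤ ε₁ and |β̃₃-β₃| ≤ ε₃ equals max( ρ(β₁+ε₁, β₃+ε₃) - ρ(β₁,β₃), ρ(β₁,β₃) - ρ(β₁-ε₁, β₃-ε₃) ), where ρ(β₁,β₃) = (2β₁β₃+2β₁+2β₃-β₁²-β₃²-1)/(1-(β₁-β₃)²). -/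
noncomputable def rhoPhi (β₁ β₃ : ℝ) : ℝ :=
  (2 * β₁ * β₃ + 2 * β₁ + 2 * β₃ - β₁ ^ 2 - β₃ ^ 2 - 1) / (1 - (β₁ - β₃) ^ 2)

lemma rhoPhi_comm (x y : ℝ) : rhoPhi x y = rhoPhi y x := by
  unfold rhoPhi; ring_nf

lemma rho_mono_x {x₁ x₂ y : ℝ} (hx : 0 < x₁) (hy : 0 < y) (hs : x₂ + y < 1)
    (h1 : x₁ ≤ x₂) : rhoPhi x₁ y ≤ rhoPhi x₂ y := by
  have hx₂ : 0 < x₂ := lt_of_lt_of_le hx h1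
  have hD₁ : 0 < 1 - (x₁ - y) ^ 2 := by nlinarith
  have hD₂ : 0 < 1 - (x₂ - y) ^ 2 := by nlinarith
  rw [rhoPhi, rhoPhi, div_le_div_iff₀ hD₁ hD₂]
  have ht : 0 ≤ x₂ - x₁ := sub_nonneg.2 h1
  have hv : 0 < 1 - x₂ - y := by linarith
  have hw : 0 < 1 + x₂ - y := by linarith
  nlinarith [mul_nonneg ht (sq_nonneg (1 - x₂ - y)),
    mul_nonneg ht (mul_pos hy hv).le,
    mul_nonneg ht (mul_pos hy hw).le,
    mul_nonneg (mul_nonneg ht ht) hv.le]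

lemma rho_mono {x₁ y₁ x₂ y₂ : ℝ} (hx : 0 < x₁) (hy : 0 < y₁) (hs : x₂ + y₂ < 1)
    (h1 : x₁ ≤ x₂) (h2 : y₁ ≤ y₂) : rhoPhi x₁ y₁ ≤ rhoPhi x₂ y₂ := by
  have hy₂ : 0 < y₂ := lt_of_lt_of_le hy h2
  have step1 : rhoPhi x₁ y₁ ≤ rhoPhi x₂ y₁ := rho_mono_x hx hy (by linarith) h1
  have step2 : rhoPhi x₂ y₁ ≤ rhoPhi x₂ y₂ := by
    rw [rhoPhi_comm x₂ y₁, rhoPhi_comm x₂ y₂]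
    exact rho_mono_x hy (lt_of_lt_of_le hx h1) (by linarith) h2
  linarith

theorem max_correlation_deviation_on_box
    (β₁ β₃ ε₁ ε₃ : ℝ) (hε₁ : 0 < ε₁) (hε₃ : 0 < ε₃)
    (hbox : ∀ x y : ℝ, |x - β₁| ≤ ε₁ → |y - β₃| ≤ ε₃ →
      0 < x ∧ 0 < y ∧ x + y < 1) :
    IsGreatest
      {d : ℝ | ∃ b₁ b₃ : ℝ, |b₁ - β₁| ≤ ε₁ ∧ |b₃ - β₃| ≤ ε₃ ∧
        d = |rhoPhi b₁ b₃ - rhoPhi β₁ β₃|}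
      (max (rhoPhi (β₁ + ε₁) (β₃ + ε₃) - rhoPhi β₁ β₃)
           (rhoPhi β₁ β₃ - rhoPhi (β₁ - ε₁) (β₃ - ε₃))) := by
  have hhi₁ : |(β₁ + ε₁) - β₁| ≤ ε₁ := by rw [abs_le]; constructor <;> linarith
  have hhi₃ : |(β₃ + ε₃) - β₃| ≤ ε₃ := by rw [abs_le]; constructor <;> linarith
  have hlo₁ : |(β₁ - ε₁) - β₁| ≤ ε₁ := by rw [abs_le]; constructor <;> linarith
  have hlo₃ : |(β₃ - ε₃) - β₃| ≤ ε₃ := by rw [abs_le]; constructor <;> linarith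
  obtain ⟨hlp₁, hlp₃, _⟩ := hbox (β₁ - ε₁) (β₃ - ε₃) hlo₁ hlo₃
  obtain ⟨_, _, hhs⟩ := hbox (β₁ + ε₁) (β₃ + ε₃) hhi₁ hhi₃
  -- upper and lower corner values bound rhoPhi on the box
  have key : ∀ b₁ b₃ : ℝ, |b₁ - β₁| ≤ ε₁ → |b₃ - β₃| ≤ ε₃ →
      rhoPhi (β₁ - ε₁) (β₃ - ε₃) ≤ rhoPhi b₁ b₃ ∧
      rhoPhi b₁ b₃ ≤ rhoPhi (β₁ + ε₁) (β₃ + ε₃) := by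
    intro b₁ b₃ h₁ h₃
    rw [abs_le] at h₁ h₃
    obtain ⟨hb₁, hb₃, hbs⟩ := hbox b₁ b₃ (abs_le.2 h₁) (abs_le.2 h₃)
    exact ⟨rho_mono hlp₁ hlp₃ hbs (by linarith) (by linarith),
      rho_mono hb₁ hb₃ hhs (by linarith) (by linarith)⟩
  have hβ₁ : |β₁ - β₁| ≤ ε₁ := by simp; linarith
  have hβ₃ : |β₃ - β₃| ≤ ε₃ := by simp; linarith
  obtain ⟨hβlo, hβhi⟩ := key β₁ β₃ hβ₁ hβ₃
  constructor
  · -- membership: one of the two corners attains the max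
    rcases le_total (rhoPhi β₁ β₃ - rhoPhi (β₁ - ε₁) (β₃ - ε₃))
        (rhoPhi (β₁ + ε₁) (β₃ + ε₃) - rhoPhi β₁ β₃) with h | h
    · refine ⟨β₁ + ε₁, β₃ + ε₃, hhi₁, hhi₃, ?_⟩
      rw [max_eq_left h, abs_of_nonneg (by linarith)]
    · refine ⟨β₁ - ε₁, β₃ - ε₃, hlo₁, hlo₃, ?_⟩
      rw [max_eq_right h, abs_of_nonpos (by linarith)]
      ring
  · -- upper bound
    rintro d ⟨b₁, b₃, h₁, h₃, rfl⟩
    obtain ⟨hl, hh⟩ := key b₁ b₃ h₁ h₃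
    rw [abs_sub_le_iff]
    constructor
    · exact le_max_of_le_left (by linarith)
    · exact le_max_of_le_right (by linarith)
end
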